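/- Let A ⊆ EuclideanSpace ℝ (Fin n) be an open bounded set whose frontier Γ = frontier A is nonempty, and define the signed distance function u by u(x) = infDist(x, Γ) if x ∉ A and u(x) = −infDist(x, Γ) if x ∈ A. If x ∉ Γ and u is differentiable at x, then the gradient of u at x has norm one: ‖∇u(x)‖ = 1. -/

import Mathlib

open Metric

/-- Auxiliary: if `u = ε * infDist · Γ` on the ball around `x` of radius `infDist x Γ`,
with `|ε| = 1`, `Γ` compact nonempty, then the gradient of `u` at `x` has norm one. -/
lemma signedDist_aux {n : ℕ} (Γ : Set (EuclideanSpace ℝ (Fin n)))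
    (hc : IsCompact Γ) (hne : Γ.Nonempty)
    (u : EuclideanSpace ℝ (Fin n) → ℝ) (ε : ℝ) (hε : ε = 1 ∨ ε = -1)
    (x : EuclideanSpace ℝ (Fin n)) (hpos : 0 < Metric.infDist x Γ)
    (hu : ∀ z ∈ Metric.ball x (Metric.infDist x Γ), u z = ε * Metric.infDist z Γ)
    (hd : DifferentiableAt ℝ u x) : ‖gradient u x‖ = 1 := by
  set d := Metric.infDist x Γ with hdd
  have hεabs : |ε| = 1 := by rcases hε with h | h <;> simp [h]
  -- norm of gradient equals norm of fderiv
  have hgrad : ‖gradient u x‖ = ‖fderiv ℝ u x‖ := by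
    rw [gradient]
    exact LinearIsometryEquiv.norm_map _ _
  -- upper bound: u is 1-Lipschitz on the ball
  have hlip : LipschitzOnWith 1 u (Metric.ball x d) := by
    rw [lipschitzOnWith_iff_dist_le_mul]
    intro z hz w hw
    rw [hu z hz, hu w hw]
    have h1 : dist (ε * Metric.infDist z Γ) (ε * Metric.infDist w Γ)
        = |ε| * dist (Metric.infDist z Γ) (Metric.infDist w Γ) := by
      simp [Real.dist_eq, ← abs_mul, mul_sub]
    rw [h1, hεabs, one_mul]
    have := (Metric.lipschitz_infDist_pt Γ).dist_le_mul z w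
    simpa using this
  have hub : ‖fderiv ℝ u x‖ ≤ 1 := by
    have := norm_fderiv_le_of_lipschitzOn ℝ (Metric.ball_mem_nhds x hpos) hlip
    simpa using this
  -- lower bound
  obtain ⟨y, hyΓ, hxy⟩ := hc.exists_infDist_eq_dist hne x
  have hdpos := hpos
  set v : EuclideanSpace ℝ (Fin n) := d⁻¹ • (y - x) with hv
  have hd0 : d ≠ 0 := hpos.ne'
  have hyx : ‖y - x‖ = d := by
    rw [hdd, hxy, dist_comm, dist_eq_norm]
  have hvnorm : ‖v‖ = 1 := by
    rw [hv, norm_smul, hyx, norm_inv, Real.norm_eq_abs, abs_of_pos hpos,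
      inv_mul_cancel₀ hpos.ne']
  -- u along the segment
  have hseg : ∀ t ∈ Set.Ico (0 : ℝ) d, u (x + t • v) = ε * (d - t) := by
    intro t ⟨ht0, htd⟩
    have hdist : dist (x + t • v) x = t := by
      rw [dist_eq_norm]
      simp [norm_smul, hvnorm, abs_of_nonneg ht0]
    have hmem : x + t • v ∈ Metric.ball x d := by
      rw [Metric.mem_ball, hdist]; exact htd
    have key : Metric.infDist (x + t • v) Γ = d - t := by
      have hle : Metric.infDist (x + t • v) Γ ≤ d - t := by
        have : dist (x + t • v) y = d - t := by
          have h2 : x + t • v - y = (t - d) • v := by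
            rw [hv, smul_smul, smul_smul]
            match_scalars <;> field_simp <;> ring
          rw [dist_eq_norm, h2, norm_smul, hvnorm, mul_one, Real.norm_eq_abs,
            abs_of_nonpos (by linarith)]
          ring
        calc Metric.infDist (x + t • v) Γ ≤ dist (x + t • v) y :=
              Metric.infDist_le_dist_of_mem hyΓ
          _ = d - t := this
      have hge : d - t ≤ Metric.infDist (x + t • v) Γ := by
        have := Metric.infDist_le_infDist_add_dist (x := x) (y := x + t • v) (s := Γ)
        rw [dist_comm, hdist] at this
        linarith [this]
      linarith
    rw [hu _ hmem, key]
  -- derivative of t ↦ u (x + t • v) at 0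
  have hline : HasDerivAt (fun t : ℝ => x + t • v) v 0 := by
    have : HasDerivAt (fun t : ℝ => t • v) v 0 := by
      simpa using (hasDerivAt_id (0 : ℝ)).smul_const v
    simpa using this.const_add x
  have hdx : HasFDerivAt u (fderiv ℝ u x) (x + (0:ℝ) • v) := by
    rw [show x + (0:ℝ) • v = x by simp]
    exact hd.hasFDerivAt
  have h1 : HasDerivAt (fun t : ℝ => u (x + t • v)) (fderiv ℝ u x v) 0 :=
    hdx.comp_hasDerivAt 0 hline
  have h2 : HasDerivWithinAt (fun t : ℝ => u (x + t • v)) (-ε) (Set.Ici 0) 0 := by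
    have haff : HasDerivAt (fun t : ℝ => ε * (d - t)) (-ε) 0 := by
      have : HasDerivAt (fun t : ℝ => d - t) (-1) 0 := by
        simpa using ((hasDerivAt_id (0 : ℝ)).const_sub d)
      simpa using this.const_mul ε
    refine (haff.hasDerivWithinAt).congr_of_eventuallyEq ?_ ?_
    · filter_upwards [Ico_mem_nhdsGE_of_mem (by constructor <;> simp [hpos] : (0:ℝ) ∈ Set.Ico 0 d)]
        with t ht
      exact hseg t ht
    · have := hseg 0 ⟨le_refl 0, hpos⟩
      simpa using this
  have huniq : fderiv ℝ u x v = -ε := by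
    exact (uniqueDiffOn_Ici (0:ℝ) 0 Set.self_mem_Ici).eq_deriv _
      (h1.hasDerivWithinAt) h2
  have hlb : 1 ≤ ‖fderiv ℝ u x‖ := by
    have := (fderiv ℝ u x).le_opNorm v
    rw [huniq, hvnorm, mul_one] at this
    have h3 : |(-ε)| = 1 := by rw [abs_neg, hεabs]
    calc (1:ℝ) = ‖-ε‖ := by rw [Real.norm_eq_abs, h3]
      _ ≤ ‖fderiv ℝ u x‖ := this
  rw [hgrad]
  linarith

/-- Eikonal equation: at every point of differentiability off the interface, the gradient of
the signed distance function has norm one. -/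
theorem signedDist_gradient_norm_one
    {n : ℕ} (A : Set (EuclideanSpace ℝ (Fin n))) (hA : IsOpen A)
    (hbdd : Bornology.IsBounded A) (hΓ : (frontier A).Nonempty)
    (u : EuclideanSpace ℝ (Fin n) → ℝ)
    (hu_in : ∀ x ∈ A, u x = -Metric.infDist x (frontier A))
    (hu_out : ∀ x ∉ A, u x = Metric.infDist x (frontier A))
    (x : EuclideanSpace ℝ (Fin n)) (hx : x ∉ frontier A)
    (hd : DifferentiableAt ℝ u x) :
    ‖gradient u x‖ = 1 := by
  have hΓclosed : IsClosed (frontier A) := isClosed_frontier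
  have hΓbdd : Bornology.IsBounded (frontier A) :=
    hbdd.closure.subset frontier_subset_closure
  have hΓcomp : IsCompact (frontier A) :=
    Metric.isCompact_of_isClosed_isBounded hΓclosed hΓbdd
  have hpos : 0 < Metric.infDist x (frontier A) :=
    (hΓclosed.notMem_iff_infDist_pos hΓ).1 hx
  set d := Metric.infDist x (frontier A) with hdd
  -- the ball avoids the frontier
  have hball : Metric.ball x d ⊆ A ∪ (closure A)ᶜ := by
    intro z hz
    have hzΓ : z ∉ frontier A := by
      intro hzΓ
      have h5 : Metric.infDist x (frontier A) ≤ dist x z :=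
        Metric.infDist_le_dist_of_mem hzΓ
      rw [Metric.mem_ball, dist_comm] at hz
      rw [← hdd] at h5
      linarith
    by_cases hzA : z ∈ A
    · exact Or.inl hzA
    · right
      intro hzc
      exact hzΓ ⟨hzc, fun h => hzA (interior_subset (hA.interior_eq ▸ h))⟩
  have hdisj : Disjoint A (closure A)ᶜ :=
    disjoint_compl_right.mono_left subset_closure
  have hconn : IsPreconnected (Metric.ball x d) := (convex_ball x d).isPreconnected
  have hxball : x ∈ Metric.ball x d := Metric.mem_ball_self hpos
  rcases hconn.subset_or_subset hA isClosed_closure.isOpen_compl hdisj hball with h | h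
  · -- ball inside A
    exact signedDist_aux (frontier A) hΓcomp hΓ u (-1) (Or.inr rfl) x hpos
      (fun z hz => by rw [hu_in z (h hz)]; ring) hd
  · -- ball inside complement of closure
    exact signedDist_aux (frontier A) hΓcomp hΓ u 1 (Or.inl rfl) x hpos
      (fun z hz => by rw [hu_out z (fun hzA => h hz (subset_closure hzA))]; ring) hd
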